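/- Let f ∈ 𝔽₂[x₀,x₁,x₃,x₄]. Then f is invariant, i.e. ψ(f) equals the image of f in E, if and only if f lies in the 𝔽₂-subalgebra of 𝔽₂[x₀,x₁,x₃,x₄] generated by the five elements x₀, x₁², x₀x₄ + x₁x₃, x₃², x₄². (This computes the invariants of Sym(V) under the α₂ × α₂-action, V = 𝔽₂{x₀,x₁,x₃,x₄}.) -/

import Mathlib

set_option synthInstance.maxHeartbeats 1000000
set_option maxHeartbeats 1000000

open MvPolynomial

noncomputable section

/-- `P = 𝔽₂[x₀, x₁, x₃, x₄]`, with variables indexed `0 ↦ x₀, 1 ↦ x₁, 2 ↦ x₃, 3 ↦ x₄`. -/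
abbrev P : Type := MvPolynomial (Fin 4) (ZMod 2)

/-- `P[s, t]`, with `0 ↦ s` and `1 ↦ t`. -/
abbrev PE : Type := MvPolynomial (Fin 2) P

/-- The ideal `(s², t²)` of `P[s, t]`. -/
def Eid : Ideal PE := Ideal.span ({X 0 ^ 2, X 1 ^ 2} : Set PE)

/-- `E = 𝔽₂[x₀, x₁, x₃, x₄][s, t]/(s², t²)`. -/
abbrev E : Type := PE ⧸ Eid

def sE : E := Ideal.Quotient.mk Eid (X 0)
def tE : E := Ideal.Quotient.mk Eid (X 1)

/-- The canonical map `𝔽₂[x₀, x₁, x₃, x₄] → E`. -/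
def ι : P →+* E := (Ideal.Quotient.mk Eid).comp (C : P →+* PE)

def x0 : P := X 0
def x1 : P := X 1
def x3 : P := X 2
def x4 : P := X 3

/-- The coaction of `O(α₂ × α₂) = 𝔽₂[s, t]/(s², t²)` on `Sym(V)`, `V = 𝔽₂{x₀, x₁, x₃, x₄}`. -/
def ψ : P →+* E :=
  (aeval ![ι x0,
           ι x1 + ι x0 * sE,
           ι x3 + ι x0 * tE,
           ι x4 + ι x3 * sE + ι x1 * tE + ι x0 * sE * tE] : P →ₐ[ZMod 2] E).toRingHom


lemma add_single_apply (e : Fin 4 →₀ ℕ) (i : Fin 4) :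
    (e + Finsupp.single i 1 : Fin 4 →₀ ℕ) i = e i + 1 := by
  rw [Finsupp.add_apply, Finsupp.single_eq_same]

lemma sub_single_add (d : Fin 4 →₀ ℕ) (i : Fin 4) (h : d i ≠ 0) :
    d - Finsupp.single i 1 + Finsupp.single i 1 = d := by
  ext j
  rw [Finsupp.add_apply, Finsupp.tsub_apply]
  rcases eq_or_ne j i with rfl | hj
  · rw [Finsupp.single_eq_same]; omega
  · rw [Finsupp.single_eq_of_ne' (Ne.symm hj)]; omega

lemma add_single_sub (e : Fin 4 →₀ ℕ) (i : Fin 4) :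
    (e + Finsupp.single i 1 : Fin 4 →₀ ℕ) - Finsupp.single i 1 = e := by
  ext j
  rw [Finsupp.tsub_apply, Finsupp.add_apply]
  rcases eq_or_ne j i with rfl | hj
  · rw [Finsupp.single_eq_same]; omega
  · rw [Finsupp.single_eq_of_ne' (Ne.symm hj)]; omega

lemma sub_single_apply (d : Fin 4 →₀ ℕ) (i : Fin 4) :
    (d - Finsupp.single i 1 : Fin 4 →₀ ℕ) i = d i - 1 := by
  rw [Finsupp.tsub_apply, Finsupp.single_eq_same]

lemma coeff_pderiv (i : Fin 4) (f : P) (e : Fin 4 →₀ ℕ) :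
    coeff e (pderiv i f) = coeff (e + Finsupp.single i 1) f * ((e i : ZMod 2) + 1) := by
  induction f using MvPolynomial.induction_on' with
  | monomial d a =>
    rw [pderiv_monomial, coeff_monomial, coeff_monomial]
    by_cases hd : d = e + Finsupp.single i 1
    · subst hd
      rw [if_pos (add_single_sub e i), if_pos rfl, add_single_apply]
      push_cast
      ring
    · rw [if_neg hd, zero_mul]
      by_cases hd2 : d - Finsupp.single i 1 = e
      · have hdi : d i = 0 := by
          by_contra hne
          exact hd (by rw [← hd2, sub_single_add d i hne])
        rw [if_pos hd2, hdi]
        simp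
      · rw [if_neg hd2]
  | add p q hp hq => simp [map_add, coeff_add, hp, hq, add_mul]

lemma pderiv_pderiv_self (i : Fin 4) (f : P) : pderiv i (pderiv i f) = 0 := by
  apply MvPolynomial.ext
  intro e
  rw [coeff_pderiv, coeff_pderiv, coeff_zero, add_single_apply]
  push_cast
  generalize ((e i : ℕ) : ZMod 2) = c
  generalize coeff (e + Finsupp.single i 1 + Finsupp.single i 1) f = a
  have h : (c + 1 + 1) * (c + 1) = 0 := by revert c; decide
  calc a * (c + 1 + 1) * (c + 1) = a * ((c + 1 + 1) * (c + 1)) := by ring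
    _ = 0 := by rw [h, mul_zero]

lemma even_of_pderiv_eq_zero {i : Fin 4} {f : P} (hf : pderiv i f = 0)
    {d : Fin 4 →₀ ℕ} (hd : d ∈ f.support) : Even (d i) := by
  by_contra hodd
  rw [Nat.not_even_iff_odd] at hodd
  have hpos : d i ≠ 0 := by rcases hodd with ⟨k, hk⟩; omega
  have h0 := coeff_pderiv i f (d - Finsupp.single i 1)
  rw [hf, coeff_zero, sub_single_add d i hpos, sub_single_apply] at h0
  have heven : Even (d i - 1) := by rcases hodd with ⟨k, hk⟩; exact ⟨k, by omega⟩
  have hz : ((d i - 1 : ℕ) : ZMod 2) = 0 := by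
    rw [ZMod.natCast_eq_zero_iff]
    exact heven.two_dvd
  rw [hz, zero_add, mul_one] at h0
  exact (MvPolynomial.mem_support_iff.mp hd) h0.symm


abbrev A5 : Subalgebra (ZMod 2) P :=
  Algebra.adjoin (ZMod 2) ({x0, x1 ^ 2, x0 * x4 + x1 * x3, x3 ^ 2, x4 ^ 2} : Set P)

lemma sq_mem (n : Fin 4) : (X n : P) ^ 2 ∈ A5 := by
  fin_cases n
  · exact pow_mem (Algebra.subset_adjoin (Set.mem_insert x0 _)) 2
  · exact Algebra.subset_adjoin (Set.mem_insert_of_mem _ (Set.mem_insert _ _))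
  · exact Algebra.subset_adjoin (Set.mem_insert_of_mem _ (Set.mem_insert_of_mem _
      (Set.mem_insert_of_mem _ (Set.mem_insert _ _))))
  · exact Algebra.subset_adjoin (Set.mem_insert_of_mem _ (Set.mem_insert_of_mem _
      (Set.mem_insert_of_mem _ (Set.mem_insert_of_mem _ (Set.mem_singleton _)))))

lemma mem_of_even {g : P}
    (h1 : ∀ d ∈ g.support, Even (d 1))
    (h2 : ∀ d ∈ g.support, Even (d 2))
    (h3 : ∀ d ∈ g.support, Even (d 3)) : g ∈ A5 := by
  rw [g.as_sum]
  apply Subalgebra.sum_mem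
  intro d hd
  rw [monomial_eq]
  apply mul_mem
  · exact (A5).algebraMap_mem _
  · apply Subalgebra.prod_mem
    intro j hj
    have hx : ∀ (n : Fin 4), Even (d n) ∨ n = 0 → X n ^ d n ∈ A5 := by
      rintro n (⟨k, hk⟩ | rfl)
      · rw [hk, ← two_mul, pow_mul]
        exact pow_mem (sq_mem n) k
      · exact pow_mem (Algebra.subset_adjoin (Set.mem_insert x0 _)) _
    fin_cases j
    · exact hx 0 (Or.inr rfl)
    · exact hx 1 (Or.inl (h1 d hd))
    · exact hx 2 (Or.inl (h2 d hd))
    · exact hx 3 (Or.inl (h3 d hd))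


open TrivSqZeroExt DualNumber


def d1 : Derivation (ZMod 2) P P := x0 • pderiv 1 + x3 • pderiv 3
def d2 : Derivation (ZMod 2) P P := x0 • pderiv 2 + x1 • pderiv 3

lemma d1_X : ∀ i : Fin 4, d1 (X i) = ![0, x0, 0, x3] i := by
  intro i
  fin_cases i <;>
    simp [d1, x0, x1, x3, x4, Derivation.add_apply, Derivation.smul_apply,
      pderiv_X, Pi.single_apply, smul_eq_mul]

lemma d2_X : ∀ i : Fin 4, d2 (X i) = ![0, 0, x0, x1] i := by
  intro i
  fin_cases i <;>
    simp [d2, x0, x1, x3, x4, Derivation.add_apply, Derivation.smul_apply,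
      pderiv_X, Pi.single_apply, smul_eq_mul]

set_option synthInstance.maxHeartbeats 1000000 in
lemma aeval_dual (d : Derivation (ZMod 2) P P) (f : P) :
    aeval (fun i => (inl (X i) + inr (d (X i)) : DualNumber P)) f
      = inl f + inr (d f) := by
  induction f using MvPolynomial.induction_on with
  | C a =>
    have hd : d (C a) = 0 := by
      have : (C a : P) = algebraMap (ZMod 2) P a := rfl
      rw [this, Derivation.map_algebraMap]
    rw [aeval_C, hd, inr_zero, add_zero]
    rfl
  | add p q hp hq =>
    have hd : d (p + q) = d p + d q := map_add d p q
    rw [map_add, hp, hq, hd, inl_add, inr_add]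
    abel
  | mul_X p n hp =>
    rw [map_mul, hp, aeval_X]
    refine TrivSqZeroExt.ext ?_ ?_
    · simp [TrivSqZeroExt.fst_mul]
    · simp [DualNumber.snd_mul, smul_eq_mul, Derivation.leibniz]
      ring

example : True := trivial


def ψA : P →ₐ[ZMod 2] E :=
  aeval ![ι x0,
           ι x1 + ι x0 * sE,
           ι x3 + ι x0 * tE,
           ι x4 + ι x3 * sE + ι x1 * tE + ι x0 * sE * tE]

lemma ψ_eq (f : P) : ψ f = ψA f := rfl

def Ψ : P →ₐ[ZMod 2] PE :=
  aeval ![C x0, C x1 + C x0 * X 0, C x3 + C x0 * X 1,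
          C x4 + C x3 * X 0 + C x1 * X 1 + C x0 * (X 0 * X 1)]

lemma mk_Ψ (f : P) : Ideal.Quotient.mk Eid (Ψ f) = ψ f := by
  have h : (Ideal.Quotient.mkₐ (ZMod 2) Eid).comp Ψ = ψA := by
    apply MvPolynomial.algHom_ext
    intro i
    fin_cases i <;>
      simp [Ψ, ψA, ι, sE, tE, Ideal.Quotient.mkₐ_eq_mk, RingHom.coe_comp, Function.comp,
        mul_assoc] <;> try ring
  have := DFunLike.congr_fun h f
  simpa [Ideal.Quotient.mkₐ_eq_mk, ψ_eq] using this

set_option synthInstance.maxHeartbeats 1000000 in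
def φ1 : PE →ₐ[P] DualNumber P := aeval ![ε, 0]

set_option synthInstance.maxHeartbeats 1000000 in
def φ2 : PE →ₐ[P] DualNumber P := aeval ![0, ε]

lemma d1_X0 : d1 (X 0) = 0 := by rw [d1_X 0]; rfl
lemma d1_X1 : d1 (X 1) = x0 := by rw [d1_X 1]; rfl
lemma d1_X2 : d1 (X 2) = 0 := by rw [d1_X 2]; rfl
lemma d1_X3 : d1 (X 3) = x3 := by rw [d1_X 3]; rfl
lemma d2_X0 : d2 (X 0) = 0 := by rw [d2_X 0]; rfl
lemma d2_X1 : d2 (X 1) = 0 := by rw [d2_X 1]; rfl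
lemma d2_X2 : d2 (X 2) = x0 := by rw [d2_X 2]; rfl
lemma d2_X3 : d2 (X 3) = x1 := by rw [d2_X 3]; rfl

lemma φ1_Ψ (f : P) : φ1 (Ψ f) = inl f + inr (d1 f) := by
  rw [← aeval_dual d1 f]
  have h : (φ1.restrictScalars (ZMod 2)).comp Ψ
      = (aeval fun i => (inl (X i) + inr (d1 (X i)) : DualNumber P) : P →ₐ[ZMod 2] _) := by
    apply MvPolynomial.algHom_ext
    intro i
    fin_cases i
    · show ((φ1.restrictScalars (ZMod 2)).comp Ψ) (X 0)
          = (aeval fun i => (inl (X i) + inr (d1 (X i)) : DualNumber P)) (X 0)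
      simp only [AlgHom.coe_comp, Function.comp_apply, AlgHom.coe_restrictScalars', Ψ, φ1,
        aeval_X, aeval_C, map_add, map_mul, Matrix.cons_val_zero, Matrix.cons_val_one,
        Matrix.head_cons, Matrix.cons_val_two, Matrix.tail_cons, Matrix.cons_val_three,
        d1_X0, d1_X1, d1_X2, d1_X3,
        DualNumber.eps, TrivSqZeroExt.inl_mul_inr, smul_eq_mul, mul_one, mul_zero, add_zero,
        TrivSqZeroExt.inr_zero, TrivSqZeroExt.algebraMap_eq_inl, zero_mul, x0, x1, x3, x4]
    · show ((φ1.restrictScalars (ZMod 2)).comp Ψ) (X 1)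
          = (aeval fun i => (inl (X i) + inr (d1 (X i)) : DualNumber P)) (X 1)
      simp only [AlgHom.coe_comp, Function.comp_apply, AlgHom.coe_restrictScalars', Ψ, φ1,
        aeval_X, aeval_C, map_add, map_mul, Matrix.cons_val_zero, Matrix.cons_val_one,
        Matrix.head_cons, Matrix.cons_val_two, Matrix.tail_cons, Matrix.cons_val_three,
        d1_X0, d1_X1, d1_X2, d1_X3,
        DualNumber.eps, TrivSqZeroExt.inl_mul_inr, smul_eq_mul, mul_one, mul_zero, add_zero,
        TrivSqZeroExt.inr_zero, TrivSqZeroExt.algebraMap_eq_inl, zero_mul, x0, x1, x3, x4]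
    · show ((φ1.restrictScalars (ZMod 2)).comp Ψ) (X 2)
          = (aeval fun i => (inl (X i) + inr (d1 (X i)) : DualNumber P)) (X 2)
      simp only [AlgHom.coe_comp, Function.comp_apply, AlgHom.coe_restrictScalars', Ψ, φ1,
        aeval_X, aeval_C, map_add, map_mul, Matrix.cons_val_zero, Matrix.cons_val_one,
        Matrix.head_cons, Matrix.cons_val_two, Matrix.tail_cons, Matrix.cons_val_three,
        d1_X0, d1_X1, d1_X2, d1_X3,
        DualNumber.eps, TrivSqZeroExt.inl_mul_inr, smul_eq_mul, mul_one, mul_zero, add_zero,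
        TrivSqZeroExt.inr_zero, TrivSqZeroExt.algebraMap_eq_inl, zero_mul, x0, x1, x3, x4]
    · show ((φ1.restrictScalars (ZMod 2)).comp Ψ) (X 3)
          = (aeval fun i => (inl (X i) + inr (d1 (X i)) : DualNumber P)) (X 3)
      simp only [AlgHom.coe_comp, Function.comp_apply, AlgHom.coe_restrictScalars', Ψ, φ1,
        aeval_X, aeval_C, map_add, map_mul, Matrix.cons_val_zero, Matrix.cons_val_one,
        Matrix.head_cons, Matrix.cons_val_two, Matrix.tail_cons, Matrix.cons_val_three,
        d1_X0, d1_X1, d1_X2, d1_X3,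
        DualNumber.eps, TrivSqZeroExt.inl_mul_inr, smul_eq_mul, mul_one, mul_zero, add_zero,
        TrivSqZeroExt.inr_zero, TrivSqZeroExt.algebraMap_eq_inl, zero_mul, x0, x1, x3, x4]
  exact DFunLike.congr_fun h f

lemma φ2_Ψ (f : P) : φ2 (Ψ f) = inl f + inr (d2 f) := by
  rw [← aeval_dual d2 f]
  have h : (φ2.restrictScalars (ZMod 2)).comp Ψ
      = (aeval fun i => (inl (X i) + inr (d2 (X i)) : DualNumber P) : P →ₐ[ZMod 2] _) := by
    apply MvPolynomial.algHom_ext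
    intro i
    fin_cases i
    · show ((φ2.restrictScalars (ZMod 2)).comp Ψ) (X 0)
          = (aeval fun i => (inl (X i) + inr (d2 (X i)) : DualNumber P)) (X 0)
      simp only [AlgHom.coe_comp, Function.comp_apply, AlgHom.coe_restrictScalars', Ψ, φ2,
        aeval_X, aeval_C, map_add, map_mul, Matrix.cons_val_zero, Matrix.cons_val_one,
        Matrix.head_cons, Matrix.cons_val_two, Matrix.tail_cons, Matrix.cons_val_three,
        d2_X0, d2_X1, d2_X2, d2_X3,
        DualNumber.eps, TrivSqZeroExt.inl_mul_inr, smul_eq_mul, mul_one, mul_zero, add_zero,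
        TrivSqZeroExt.inr_zero, TrivSqZeroExt.algebraMap_eq_inl, zero_mul, x0, x1, x3, x4]
    · show ((φ2.restrictScalars (ZMod 2)).comp Ψ) (X 1)
          = (aeval fun i => (inl (X i) + inr (d2 (X i)) : DualNumber P)) (X 1)
      simp only [AlgHom.coe_comp, Function.comp_apply, AlgHom.coe_restrictScalars', Ψ, φ2,
        aeval_X, aeval_C, map_add, map_mul, Matrix.cons_val_zero, Matrix.cons_val_one,
        Matrix.head_cons, Matrix.cons_val_two, Matrix.tail_cons, Matrix.cons_val_three,
        d2_X0, d2_X1, d2_X2, d2_X3,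
        DualNumber.eps, TrivSqZeroExt.inl_mul_inr, smul_eq_mul, mul_one, mul_zero, add_zero,
        TrivSqZeroExt.inr_zero, TrivSqZeroExt.algebraMap_eq_inl, zero_mul, x0, x1, x3, x4]
    · show ((φ2.restrictScalars (ZMod 2)).comp Ψ) (X 2)
          = (aeval fun i => (inl (X i) + inr (d2 (X i)) : DualNumber P)) (X 2)
      simp only [AlgHom.coe_comp, Function.comp_apply, AlgHom.coe_restrictScalars', Ψ, φ2,
        aeval_X, aeval_C, map_add, map_mul, Matrix.cons_val_zero, Matrix.cons_val_one,
        Matrix.head_cons, Matrix.cons_val_two, Matrix.tail_cons, Matrix.cons_val_three,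
        d2_X0, d2_X1, d2_X2, d2_X3,
        DualNumber.eps, TrivSqZeroExt.inl_mul_inr, smul_eq_mul, mul_one, mul_zero, add_zero,
        TrivSqZeroExt.inr_zero, TrivSqZeroExt.algebraMap_eq_inl, zero_mul, x0, x1, x3, x4]
    · show ((φ2.restrictScalars (ZMod 2)).comp Ψ) (X 3)
          = (aeval fun i => (inl (X i) + inr (d2 (X i)) : DualNumber P)) (X 3)
      simp only [AlgHom.coe_comp, Function.comp_apply, AlgHom.coe_restrictScalars', Ψ, φ2,
        aeval_X, aeval_C, map_add, map_mul, Matrix.cons_val_zero, Matrix.cons_val_one,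
        Matrix.head_cons, Matrix.cons_val_two, Matrix.tail_cons, Matrix.cons_val_three,
        d2_X0, d2_X1, d2_X2, d2_X3,
        DualNumber.eps, TrivSqZeroExt.inl_mul_inr, smul_eq_mul, mul_one, mul_zero, add_zero,
        TrivSqZeroExt.inr_zero, TrivSqZeroExt.algebraMap_eq_inl, zero_mul, x0, x1, x3, x4]
  exact DFunLike.congr_fun h f

lemma eid_ker1 : ∀ g ∈ Eid, φ1 g = 0 := by
  intro g hg
  have hle : Eid ≤ RingHom.ker φ1.toRingHom := by
    rw [Eid, Ideal.span_le]
    rintro y hy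
    rcases hy with rfl | rfl
    · rw [SetLike.mem_coe, RingHom.mem_ker]
      show φ1 (X 0 ^ 2) = 0
      rw [map_pow]
      simp only [φ1, aeval_X, Matrix.cons_val_zero]
      rw [sq, DualNumber.eps_mul_eps]
    · rw [SetLike.mem_coe, RingHom.mem_ker]
      show φ1 (X 1 ^ 2) = 0
      rw [map_pow]
      simp only [φ1, aeval_X, Matrix.cons_val_one, Matrix.head_cons]
      exact zero_pow (by norm_num)
  exact hle hg

lemma eid_ker2 : ∀ g ∈ Eid, φ2 g = 0 := by
  intro g hg
  have hle : Eid ≤ RingHom.ker φ2.toRingHom := by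
    rw [Eid, Ideal.span_le]
    rintro y hy
    rcases hy with rfl | rfl
    · rw [SetLike.mem_coe, RingHom.mem_ker]
      show φ2 (X 0 ^ 2) = 0
      rw [map_pow]
      simp only [φ2, aeval_X, Matrix.cons_val_zero]
      exact zero_pow (by norm_num)
    · rw [SetLike.mem_coe, RingHom.mem_ker]
      show φ2 (X 1 ^ 2) = 0
      rw [map_pow]
      simp only [φ2, aeval_X, Matrix.cons_val_one, Matrix.head_cons, Matrix.cons_val_zero]
      rw [sq, DualNumber.eps_mul_eps]
  exact hle hg

lemma d_eq_zero_of_invariant {f : P} (h : ψ f = ι f) : d1 f = 0 ∧ d2 f = 0 := by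
  have hmem : Ψ f - C f ∈ Eid := by
    rw [← Ideal.Quotient.eq, mk_Ψ]
    exact h
  constructor
  · have h1 : φ1 (Ψ f) = φ1 (C f) := by
      have := eid_ker1 _ hmem
      rw [map_sub, sub_eq_zero] at this
      exact this
    rw [φ1_Ψ] at h1
    simp only [φ1, aeval_C, TrivSqZeroExt.algebraMap_eq_inl] at h1
    have := congrArg TrivSqZeroExt.snd h1
    simpa using this
  · have h2 : φ2 (Ψ f) = φ2 (C f) := by
      have := eid_ker2 _ hmem
      rw [map_sub, sub_eq_zero] at this
      exact this
    rw [φ2_Ψ] at h2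
    simp only [φ2, aeval_C, TrivSqZeroExt.algebraMap_eq_inl] at h2
    have := congrArg TrivSqZeroExt.snd h2
    simpa using this


def ιA : P →ₐ[ZMod 2] E :=
  (Ideal.Quotient.mkₐ (ZMod 2) Eid).comp (IsScalarTower.toAlgHom (ZMod 2) P PE)

lemma ιA_eq (f : P) : ιA f = ι f := rfl

lemma ψA_x0 : ψA x0 = ι x0 := by
  simp only [ψA, x0, aeval_X, Matrix.cons_val_zero]
lemma ψA_x1 : ψA x1 = ι x1 + ι x0 * sE := by
  simp only [ψA, x1, aeval_X, Matrix.cons_val_one, Matrix.head_cons, Matrix.cons_val_zero]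
lemma ψA_x3 : ψA x3 = ι x3 + ι x0 * tE := by
  simp only [ψA, x3, aeval_X, Matrix.cons_val_two, Matrix.tail_cons, Matrix.head_cons]
lemma ψA_x4 : ψA x4 = ι x4 + ι x3 * sE + ι x1 * tE + ι x0 * sE * tE := by
  simp only [ψA, x4, aeval_X, Matrix.cons_val_three, Matrix.tail_cons, Matrix.head_cons]

lemma sE_sq : sE * sE = 0 := by
  rw [sE, ← map_mul, ← sq, Ideal.Quotient.eq_zero_iff_mem]
  exact Ideal.subset_span (Set.mem_insert _ _)

lemma tE_sq : tE * tE = 0 := by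
  rw [tE, ← map_mul, ← sq, Ideal.Quotient.eq_zero_iff_mem]
  exact Ideal.subset_span (Set.mem_insert_of_mem _ (Set.mem_singleton _))

lemma two_E : (2 : E) = 0 := by
  have h1 : ((2 : ℕ) : PE) = 0 := CharP.cast_eq_zero PE 2
  have h2 : ((2 : ℕ) : E) = 0 := by
    rw [← map_natCast (Ideal.Quotient.mk Eid) 2, h1, map_zero]
  exact_mod_cast h2

lemma adjoin_le_equalizer : A5 ≤ AlgHom.equalizer ψA ιA := by
  apply Algebra.adjoin_le
  intro g hg
  simp only [Set.mem_insert_iff, Set.mem_singleton_iff] at hg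
  have hs := sE_sq
  have ht := tE_sq
  have h2 := two_E
  rcases hg with rfl | rfl | rfl | rfl | rfl
  · show ψA x0 = ιA x0
    rw [ψA_x0, ιA_eq]
  · show ψA (x1 ^ 2) = ιA (x1 ^ 2)
    rw [map_pow, map_pow, ψA_x1, ιA_eq x1]
    linear_combination (ι x0 * ι x0) * hs + (ι x0 * ι x1 * sE) * h2
  · show ψA (x0 * x4 + x1 * x3) = ιA (x0 * x4 + x1 * x3)
    rw [map_add, map_mul, map_mul, ψA_x0, ψA_x1, ψA_x3, ψA_x4,
      ιA_eq (x0 * x4 + x1 * x3), map_add, map_mul, map_mul]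
    linear_combination (ι x0 * ι x3 * sE + ι x0 * ι x1 * tE + ι x0 * ι x0 * sE * tE) * h2
  · show ψA (x3 ^ 2) = ιA (x3 ^ 2)
    rw [map_pow, map_pow, ψA_x3, ιA_eq x3]
    linear_combination (ι x0 * ι x0) * ht + (ι x0 * ι x3 * tE) * h2
  · show ψA (x4 ^ 2) = ιA (x4 ^ 2)
    rw [map_pow, map_pow, ψA_x4, ιA_eq x4]
    linear_combination (ι x3 * ι x3 + ι x0 * ι x0 * tE * tE) * hs + (ι x1 * ι x1) * ht +
      (ι x4 * ι x3 * sE + ι x4 * ι x1 * tE + ι x4 * ι x0 * sE * tE + ι x3 * ι x1 * sE * tE +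
        ι x3 * ι x0 * sE * sE * tE + ι x1 * ι x0 * sE * tE * tE) * h2

lemma prime_x0 : Prime (X 0 : P) := by
  rw [← MulEquiv.prime_iff (MvPolynomial.finSuccEquiv (ZMod 2) 3).toMulEquiv]
  have : (MvPolynomial.finSuccEquiv (ZMod 2) 3).toMulEquiv (X 0 : P) = Polynomial.X := by
    show MvPolynomial.finSuccEquiv (ZMod 2) 3 (X 0 : P) = Polynomial.X
    exact finSuccEquiv_X_zero
  rw [this]
  exact Polynomial.prime_X

lemma pq1 : pderiv 1 (x0 * x4 + x1 * x3) = x3 := by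
  simp [x0, x1, x3, x4, pderiv_mul, pderiv_X, Pi.single_apply]
lemma pq2 : pderiv 2 (x0 * x4 + x1 * x3) = x1 := by
  simp [x0, x1, x3, x4, pderiv_mul, pderiv_X, Pi.single_apply]
lemma pq3 : pderiv 3 (x0 * x4 + x1 * x3) = x0 := by
  simp [x0, x1, x3, x4, pderiv_mul, pderiv_X, Pi.single_apply]

/-- A polynomial `f ∈ 𝔽₂[x₀, x₁, x₃, x₄]` is invariant under the `α₂ × α₂`-coaction if and
only if it lies in the `𝔽₂`-subalgebra generated by `x₀, x₁², x₀x₄ + x₁x₃, x₃², x₄²`. -/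
theorem invariant_iff_mem_adjoin (f : P) :
    ψ f = ι f ↔
      f ∈ Algebra.adjoin (ZMod 2)
        ({x0, x1 ^ 2, x0 * x4 + x1 * x3, x3 ^ 2, x4 ^ 2} : Set P) := by
  constructor
  · intro h
    obtain ⟨h1, h2⟩ := d_eq_zero_of_invariant h
    have e1 : x0 * pderiv 1 f + x3 * pderiv 3 f = 0 := by
      simpa [d1, Derivation.add_apply, Derivation.smul_apply, smul_eq_mul] using h1
    have e2 : x0 * pderiv 2 f + x1 * pderiv 3 f = 0 := by
      simpa [d2, Derivation.add_apply, Derivation.smul_apply, smul_eq_mul] using h2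
    have e1' : x0 * pderiv 1 f = x3 * pderiv 3 f := by
      rw [CharTwo.add_eq_iff_eq_add] at e1
      simpa using e1
    have e2' : x0 * pderiv 2 f = x1 * pderiv 3 f := by
      rw [CharTwo.add_eq_iff_eq_add] at e2
      simpa using e2
    have hx0 : (x0 : P) ≠ 0 := by
      rw [x0]; exact MvPolynomial.X_ne_zero 0
    have hdvd : (X 0 : P) ∣ pderiv 3 f := by
      have hd : (X 0 : P) ∣ x1 * pderiv 3 f := ⟨pderiv 2 f, by rw [← e2']; rfl⟩
      rcases (prime_x0.2.2) _ _ hd with hc | hc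
      · exfalso
        rw [x1, MvPolynomial.X_dvd_X] at hc
        exact absurd hc (by decide)
      · exact hc
    obtain ⟨hq, hhq⟩ := hdvd
    have hd1f : pderiv 1 f = x3 * hq := by
      apply mul_left_cancel₀ hx0
      rw [e1', hhq, x0]
      ring
    have hd2f : pderiv 2 f = x1 * hq := by
      apply mul_left_cancel₀ hx0
      rw [e2', hhq, x0]
      ring
    have hd3f : pderiv 3 f = x0 * hq := by rw [hhq]; rfl
    have hq3 : pderiv 3 hq = 0 := by
      have hdd := pderiv_pderiv_self 3 f
      rw [hd3f, pderiv_mul, x0, pderiv_X_of_ne (show (0 : Fin 4) ≠ 3 by decide),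
        zero_mul, zero_add] at hdd
      rcases mul_eq_zero.mp hdd with hc | hc
      · exact absurd hc (MvPolynomial.X_ne_zero 0)
      · exact hc
    have hq1 : pderiv 1 hq = 0 := by
      have hdd := pderiv_pderiv_self 1 f
      rw [hd1f, pderiv_mul, x3, pderiv_X_of_ne (show (2 : Fin 4) ≠ 1 by decide),
        zero_mul, zero_add] at hdd
      rcases mul_eq_zero.mp hdd with hc | hc
      · exact absurd hc (MvPolynomial.X_ne_zero 2)
      · exact hc
    have hq2 : pderiv 2 hq = 0 := by
      have hdd := pderiv_pderiv_self 2 f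
      rw [hd2f, pderiv_mul, x1, pderiv_X_of_ne (show (1 : Fin 4) ≠ 2 by decide),
        zero_mul, zero_add] at hdd
      rcases mul_eq_zero.mp hdd with hc | hc
      · exact absurd hc (MvPolynomial.X_ne_zero 1)
      · exact hc
    have hqA : hq ∈ A5 :=
      mem_of_even (fun d hd => even_of_pderiv_eq_zero hq1 hd)
        (fun d hd => even_of_pderiv_eq_zero hq2 hd)
        (fun d hd => even_of_pderiv_eq_zero hq3 hd)
    set q : P := x0 * x4 + x1 * x3 with hqdef
    set g : P := f + hq * q with hgdef
    have hg1 : pderiv 1 g = 0 := by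
      rw [hgdef, map_add, pderiv_mul, hq1, pq1, hd1f, zero_mul, zero_add, mul_comm]
      exact CharTwo.add_self_eq_zero _
    have hg2 : pderiv 2 g = 0 := by
      rw [hgdef, map_add, pderiv_mul, hq2, pq2, hd2f, zero_mul, zero_add, mul_comm]
      exact CharTwo.add_self_eq_zero _
    have hg3 : pderiv 3 g = 0 := by
      rw [hgdef, map_add, pderiv_mul, hq3, pq3, hd3f, zero_mul, zero_add, mul_comm]
      exact CharTwo.add_self_eq_zero _
    have hgA : g ∈ A5 :=
      mem_of_even (fun d hd => even_of_pderiv_eq_zero hg1 hd)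
        (fun d hd => even_of_pderiv_eq_zero hg2 hd)
        (fun d hd => even_of_pderiv_eq_zero hg3 hd)
    have hf : f = g + hq * q := by
      rw [hgdef, add_assoc, CharTwo.add_self_eq_zero, add_zero]
    rw [hf]
    exact add_mem hgA (mul_mem hqA (Algebra.subset_adjoin
      (Set.mem_insert_of_mem _ (Set.mem_insert_of_mem _ (Set.mem_insert _ _)))))
  · intro h
    have := adjoin_le_equalizer h
    have heq : ψA f = ιA f := this
    rw [ψ_eq, heq, ιA_eq]
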